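/- Let n be an odd positive integer and q = 2^n. Let * be the Knuth binary presemifield multiplication and ∘ the symplectic Knuth presemifield multiplication on F_q. Let L : F_q → F_q and M : F_q → F_q be additive (F_2-linear) maps such that Tr(L(x)·y) = Tr(x·M(y)) for all x, y ∈ F_q. Then for every nonzero a ∈ F_q, the sets {y ∈ F_q : L(y) * a + y = 0} and {y ∈ F_q : a ∘ M(y) + y = 0} have the same cardinality. (This expresses that L together with a point (α) defines a translation hyperoval of type (b) in Π(K_n) if and only if the lines l_{M(m), m}, m ∈ F_q, together with l_0 and l_α form a line hyperoval in Π(K_n^{td}).) -/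

import Mathlib

/-- Theorem 3.4 (kernel-size correspondence, type (b)):
if `L` and `M` are additive maps on `F_q` that are adjoint with respect to the trace
bilinear form, then for every nonzero `a ∈ F_q` the sets `{y : L(y)*a + y = 0}` (Knuth
multiplication `*`) and `{y : a∘M(y) + y = 0}` (symplectic multiplication `∘`) have the
same cardinality. -/
theorem kernel_size_correspondence_type_b
    (n : ℕ) (hn : Odd n) (hn0 : 0 < n)
    {F : Type*} [Field F] [Fintype F] (hF : Fintype.card F = 2 ^ n)
    (Tr : F → F) (hTr : ∀ x : F, Tr x = ∑ i ∈ Finset.range n, x ^ 2 ^ i)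
    (kmul : F → F → F)
    (hkmul : ∀ x y : F, kmul x y = x * y + (y * Tr x + x * Tr y) ^ 2)
    (smul : F → F → F)
    (hsmul : ∀ x y : F, smul x y = x * y + Tr x * y ^ 2 ^ (n - 1) + Tr (x ^ 2 * y))
    (L M : F → F)
    (hL : ∀ x y : F, L (x + y) = L x + L y)
    (hM : ∀ x y : F, M (x + y) = M x + M y)
    (hadj : ∀ x y : F, Tr (L x * y) = Tr (x * M y)) :
    ∀ a : F, a ≠ 0 → ({y : F | kmul (L y) a + y = 0}).ncard
      = ({y : F | smul a (M y) + y = 0}).ncard := by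
  classical
  intro a _ha
  -- characteristic 2
  have htwo : (2 : F) = 0 := by
    have h := FiniteField.cast_card_eq_zero F
    rw [hF] at h
    push_cast at h
    exact pow_eq_zero_iff (by omega : n ≠ 0) |>.mp h
  haveI hchar : CharP F 2 := by
    haveI := ringChar.charP F
    have hd : ringChar F ∣ 2 := ringChar.dvd htwo
    rcases (Nat.dvd_prime Nat.prime_two).mp hd with h | h
    · exact absurd h CharP.ringChar_ne_one
    · rwa [h] at this
  haveI : Fact (Nat.Prime 2) := ⟨Nat.prime_two⟩
  -- basic power facts
  have pow_card : ∀ x : F, x ^ 2 ^ n = x := by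
    intro x; rw [← hF]; exact FiniteField.pow_card x
  have sqrt_sq : ∀ y : F, (y ^ 2 ^ (n - 1)) ^ 2 = y := by
    intro y
    rw [← pow_mul]
    have he : 2 ^ (n - 1) * 2 = 2 ^ n := by
      rw [← pow_succ]; congr 1; omega
    rw [he]; exact pow_card y
  -- additivity of Tr
  have trAdd : ∀ x y : F, Tr (x + y) = Tr x + Tr y := by
    intro x y
    rw [hTr, hTr, hTr, ← Finset.sum_add_distrib]
    exact Finset.sum_congr rfl fun i _ => add_pow_char_pow x y 2 i
  have trZero : Tr 0 = 0 := by
    rw [hTr]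
    exact Finset.sum_eq_zero fun i _ => zero_pow (Nat.two_pow_pos i).ne'
  -- Tr (x^2) = Tr x
  have trSq : ∀ x : F, Tr (x ^ 2) = Tr x := by
    intro x
    have h1 : Tr (x ^ 2) = ∑ i ∈ Finset.range n, x ^ 2 ^ (i + 1) := by
      rw [hTr]
      refine Finset.sum_congr rfl fun i _ => ?_
      rw [← pow_mul, ← pow_succ']
    have h2 := Finset.sum_range_succ' (fun i => x ^ 2 ^ i) n
    have h3 := Finset.sum_range_succ (fun i => x ^ 2 ^ i) n
    rw [h2] at h3
    -- h3 : (∑ i in range n, x^2^(i+1)) + x^2^0 = (∑ i in range n, x^2^i) + x^2^n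
    simp only [pow_zero, pow_one] at h3
    rw [pow_card] at h3
    rw [h1, ← hTr x] at *
    exact add_right_cancel h3
  -- Tr x ^ 2 = Tr x
  have trPow : ∀ x : F, Tr x * Tr x = Tr x := by
    intro x
    have h1 : Tr x ^ 2 = Tr (x ^ 2) := by
      rw [hTr, hTr, sum_pow_char]
      refine Finset.sum_congr rfl fun i _ => ?_
      rw [← pow_mul, ← pow_mul, mul_comm]
    rw [← sq, h1, trSq]
  have trIdem : ∀ x : F, Tr x = 0 ∨ Tr x = 1 := by
    intro x
    have h1 : Tr x * (Tr x - 1) = 0 := by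
      have := trPow x; ring_nf; linear_combination this
    rcases mul_eq_zero.mp h1 with h' | h'
    · exact Or.inl h'
    · exact Or.inr (sub_eq_zero.mp h')
  have trMulTr : ∀ v u : F, Tr (Tr v * u) = Tr v * Tr u := by
    intro v u
    rcases trIdem v with h | h <;> rw [h]
    · rw [zero_mul, zero_mul, trZero]
    · rw [one_mul, one_mul]
  have trSqMul : ∀ w z : F, Tr (w ^ 2 * z) = Tr (w * z ^ 2 ^ (n - 1)) := by
    intro w z
    have he : w ^ 2 * z = (w * z ^ 2 ^ (n - 1)) ^ 2 := by
      rw [mul_pow, sqrt_sq]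
    rw [he, trSq]
  -- the key adjointness identity for the two multiplications
  have keyId : ∀ y z : F, Tr (kmul y a * z) = Tr (y * smul a z) := by
    intro y z
    have e1 : kmul y a * z = y * (a * z) + (a * Tr y + y * Tr a) ^ 2 * z := by
      rw [hkmul]; ring
    have e2 : y * smul a z
        = y * (a * z) + Tr a * (y * z ^ 2 ^ (n - 1)) + y * Tr (a ^ 2 * z) := by
      rw [hsmul]; ring
    rw [e1, trAdd, e2, trAdd, trAdd]
    have e3 : Tr ((a * Tr y + y * Tr a) ^ 2 * z)
        = Tr y * Tr (a * z ^ 2 ^ (n - 1)) + Tr a * Tr (y * z ^ 2 ^ (n - 1)) := by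
      rw [trSqMul]
      have e4 : (a * Tr y + y * Tr a) * z ^ 2 ^ (n - 1)
          = Tr y * (a * z ^ 2 ^ (n - 1)) + Tr a * (y * z ^ 2 ^ (n - 1)) := by ring
      rw [e4, trAdd, trMulTr, trMulTr]
    have e5 : Tr (Tr a * (y * z ^ 2 ^ (n - 1))) = Tr a * Tr (y * z ^ 2 ^ (n - 1)) :=
      trMulTr a _
    have e6 : Tr (y * Tr (a ^ 2 * z)) = Tr (a ^ 2 * z) * Tr y := by
      rw [mul_comm y _]; exact trMulTr _ y
    rw [e3, e5, e6, trSqMul a z]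
    ring
  -- the two relevant additive maps
  set gg : F → F := fun y => smul a (M y) + y with hgg
  set hh : F → F := fun y => L (kmul y a) + y with hhh
  -- additivity
  have sq2 : ∀ X Y : F, (X + Y) ^ 2 = X ^ 2 + Y ^ 2 := fun X Y => add_pow_char X Y 2
  have kmulAdd : ∀ u v : F, kmul (u + v) a = kmul u a + kmul v a := by
    intro u v
    rw [hkmul, hkmul, hkmul, trAdd]
    have e1 : a * (Tr u + Tr v) + (u + v) * Tr a
        = (a * Tr u + u * Tr a) + (a * Tr v + v * Tr a) := by ring
    rw [e1, sq2]
    ring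
  have smulAdd : ∀ u v : F, smul a (u + v) = smul a u + smul a v := by
    intro u v
    rw [hsmul, hsmul, hsmul, add_pow_char_pow]
    have e1 : a ^ 2 * (u + v) = a ^ 2 * u + a ^ 2 * v := by ring
    rw [e1, trAdd]
    ring
  have ggAdd : ∀ u v : F, gg (u + v) = gg u + gg v := by
    intro u v
    simp only [hgg, hM, smulAdd]
    ring
  have hhAdd : ∀ u v : F, hh (u + v) = hh u + hh v := by
    intro u v
    simp only [hhh, kmulAdd, hL]
    ring
  -- the adjointness between gg and hh
  have trAdj : ∀ x y : F, Tr (gg x * y) = Tr (x * hh y) := by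
    intro x y
    have e1 : gg x * y = smul a (M x) * y + x * y := by simp only [hgg]; ring
    have e2 : x * hh y = x * L (kmul y a) + x * y := by simp only [hhh]; ring
    rw [e1, trAdd, e2, trAdd]
    congr 1
    rw [mul_comm (smul a (M x)) y, ← keyId y (M x), ← hadj (kmul y a) x,
      mul_comm (L (kmul y a)) x]
  -- char-2 cancellation
  have addEq : ∀ u v : F, u + v = 0 ↔ u = v := by
    intro u v
    rw [add_eq_zero_iff_eq_neg, CharTwo.neg_eq]
  -- Step 1: bijection between the kmul-kernel and the hh-kernel
  have step1 : ({y : F | kmul (L y) a + y = 0}).ncard = ({y : F | hh y = 0}).ncard := by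
    have himg : L '' {y : F | kmul (L y) a + y = 0} = {y : F | hh y = 0} := by
      ext w
      simp only [Set.mem_image, Set.mem_setOf_eq, hhh]
      constructor
      · rintro ⟨y, hy, rfl⟩
        rw [addEq] at hy ⊢
        rw [hy]
      · intro hw
        rw [addEq] at hw
        refine ⟨kmul w a, ?_, hw⟩
        rw [addEq, hw]
    have hinj : Set.InjOn L {y : F | kmul (L y) a + y = 0} := by
      intro y hy y' hy' hyy
      rw [Set.mem_setOf_eq, addEq] at hy hy'
      rw [← hy, ← hy', hyy]
    rw [← himg, Set.ncard_image_of_injOn hinj]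
  rw [step1]
  -- Step 2: linear algebra over ZMod 2
  letI : Algebra (ZMod 2) F := ZMod.algebra F 2
  haveI : FiniteDimensional (ZMod 2) F := Module.Finite.of_finite
  -- package additive maps as ZMod 2-linear maps
  have mkLin : ∀ (f : F → F), (∀ u v : F, f (u + v) = f u + f v) →
      ∃ fl : F →ₗ[ZMod 2] F, ∀ x, fl x = f x := by
    intro f hf
    have hf0 : f 0 = 0 := by
      have := hf 0 0
      rw [add_zero] at this
      exact left_eq_add.mp this
    refine ⟨{ toFun := f, map_add' := hf, map_smul' := ?_ }, fun _ => rfl⟩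
    intro c x
    fin_cases c
    · show f ((0 : ZMod 2) • x) = (0 : ZMod 2) • f x
      simp [hf0]
    · show f ((1 : ZMod 2) • x) = (1 : ZMod 2) • f x
      simp
  obtain ⟨gl, hgl⟩ := mkLin gg ggAdd
  obtain ⟨hl, hhl⟩ := mkLin hh hhAdd
  -- the ZMod-2-valued trace
  set E : F → ZMod 2 := fun z => if Tr z = 0 then 0 else 1 with hE
  have hE0 : E 0 = 0 := by simp only [hE, trZero, if_pos]
  have hEcongr : ∀ u v : F, Tr u = Tr v → E u = E v := by
    intro u v h; simp only [hE, h]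
  have hEadd : ∀ u v : F, E (u + v) = E u + E v := by
    intro u v
    simp only [hE, trAdd]
    rcases trIdem u with hu | hu <;> rcases trIdem v with hv | hv <;>
      rw [hu, hv]
    · norm_num
    · norm_num
    · norm_num
    · have h11 : (1 : F) + 1 = 0 := by
        rw [one_add_one_eq_two, htwo]
      rw [h11, if_pos rfl, if_neg (one_ne_zero (α := F))]
      show (0 : ZMod 2) = 1 + 1
      rfl
  -- nondegeneracy: Tr is not identically zero
  have hTrNe : ∃ z : F, Tr z ≠ 0 := by
    by_contra hcon
    push_neg at hcon
    set p : Polynomial F := ∑ i ∈ Finset.range n, Polynomial.X ^ 2 ^ i with hp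
    have hpz : p = 0 := by
      apply Polynomial.eq_zero_of_natDegree_lt_card_of_eval_eq_zero p
        (f := (id : F → F)) Function.injective_id
      · intro z
        simp only [hp, Polynomial.eval_finset_sum, Polynomial.eval_pow,
          Polynomial.eval_X, id]
        rw [← hTr]; exact hcon z
      · rw [hF]
        calc p.natDegree ≤ 2 ^ (n - 1) := by
              apply Polynomial.natDegree_sum_le_of_forall_le
              intro i hi
              rw [Polynomial.natDegree_X_pow]
              exact Nat.pow_le_pow_right (by norm_num)
                (by have := Finset.mem_range.mp hi; omega)
          _ < 2 ^ n := by
              exact Nat.pow_lt_pow_right (by norm_num) (by omega)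
    have hc : p.coeff (2 ^ (n - 1)) = 1 := by
      simp only [hp, Polynomial.finset_sum_coeff, Polynomial.coeff_X_pow]
      have hcongr : ∀ i ∈ Finset.range n,
          ((if (2 ^ (n - 1) : ℕ) = 2 ^ i then (1 : F) else 0))
            = if i = n - 1 then 1 else 0 := by
        intro i _
        by_cases h : i = n - 1
        · rw [if_pos h, if_pos (by rw [h])]
        · rw [if_neg h, if_neg]
          intro hcontra
          exact h (Nat.pow_right_injective (le_refl 2) hcontra).symm
      rw [Finset.sum_congr rfl hcongr, Finset.sum_ite_eq' (Finset.range n) (n - 1)]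
      rw [if_pos (Finset.mem_range.mpr (by omega))]
    rw [hpz] at hc
    simp at hc
  -- the trace pairing as a linear map into the dual
  have zmodCases : ∀ c : ZMod 2, c = 0 ∨ c = 1 := by
    intro c
    fin_cases c
    · exact Or.inl rfl
    · exact Or.inr rfl
  obtain ⟨Φ, hΦapp⟩ : ∃ Φ : F →ₗ[ZMod 2] Module.Dual (ZMod 2) F,
      ∀ x y : F, Φ x y = E (x * y) := by
    refine ⟨LinearMap.mk₂ (ZMod 2) (fun x y => E (x * y)) ?_ ?_ ?_ ?_, fun x y => rfl⟩
    · intro m₁ m₂ nn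
      show E ((m₁ + m₂) * nn) = E (m₁ * nn) + E (m₂ * nn)
      rw [add_mul]; exact hEadd _ _
    · intro c m nn
      rcases zmodCases c with rfl | rfl
      · show E (((0 : ZMod 2) • m) * nn) = (0 : ZMod 2) • E (m * nn)
        rw [zero_smul, zero_mul, hE0, zero_smul]
      · show E (((1 : ZMod 2) • m) * nn) = (1 : ZMod 2) • E (m * nn)
        rw [one_smul, one_smul]
    · intro m n₁ n₂
      show E (m * (n₁ + n₂)) = E (m * n₁) + E (m * n₂)
      rw [mul_add]; exact hEadd _ _
    · intro c m nn
      rcases zmodCases c with rfl | rfl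
      · show E (m * ((0 : ZMod 2) • nn)) = (0 : ZMod 2) • E (m * nn)
        rw [zero_smul, mul_zero, hE0, zero_smul]
      · show E (m * ((1 : ZMod 2) • nn)) = (1 : ZMod 2) • E (m * nn)
        rw [one_smul, one_smul]
  have hΦ0 : ∀ x : F, Φ x = 0 → x = 0 := by
    intro x hx
    by_contra hx0
    obtain ⟨z, hz⟩ := hTrNe
    have h1 : Φ x (x⁻¹ * z) = 0 := by rw [hx]; rfl
    rw [hΦapp] at h1
    have h2 : x * (x⁻¹ * z) = z := by field_simp
    rw [h2] at h1
    simp only [hE] at h1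
    rw [if_neg hz] at h1
    exact one_ne_zero h1
  have hΦinj : Function.Injective Φ := by
    intro x y hxy
    have := hΦ0 (x - y) (by rw [map_sub, hxy, sub_self])
    exact sub_eq_zero.mp this
  have hΦsurj : Function.Surjective Φ := by
    have h1 : Module.finrank (ZMod 2) (LinearMap.range Φ)
        = Module.finrank (ZMod 2) (Module.Dual (ZMod 2) F) := by
      rw [LinearMap.finrank_range_of_inj hΦinj, Subspace.dual_finrank_eq]
    exact LinearMap.range_eq_top.mp (Submodule.eq_top_of_finrank_eq h1)
  -- kernel of hl is the preimage under Φ of the annihilator of range gl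
  have hker : LinearMap.ker hl
      = Submodule.comap Φ (Submodule.dualAnnihilator (LinearMap.range gl)) := by
    ext y
    simp only [LinearMap.mem_ker, Submodule.mem_comap, Submodule.mem_dualAnnihilator]
    constructor
    · intro h0 w hw
      obtain ⟨x, rfl⟩ := hw
      rw [hΦapp, mul_comm]
      have e1 : E (gl x * y) = E (x * hl y) := by
        apply hEcongr
        rw [hgl, hhl]
        exact trAdj x y
      rw [e1, h0, mul_zero, hE0]
    · intro hall
      have hΦh : Φ (hl y) = 0 := by
        apply LinearMap.ext
        intro x
        simp only [LinearMap.zero_apply]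
        rw [hΦapp, mul_comm (hl y) x]
        have e1 : E (x * hl y) = E (gl x * y) := by
          apply hEcongr
          rw [hgl, hhl]
          exact (trAdj x y).symm
        rw [e1]
        have hx := hall (gl x) ⟨x, rfl⟩
        rw [hΦapp, mul_comm y (gl x)] at hx
        exact hx
      exact hΦ0 _ hΦh
  -- finrank computation
  set Φe : F ≃ₗ[ZMod 2] Module.Dual (ZMod 2) F :=
    LinearEquiv.ofBijective Φ ⟨hΦinj, hΦsurj⟩ with hΦe
  have hfr : Module.finrank (ZMod 2) (LinearMap.ker hl)
      = Module.finrank (ZMod 2) (LinearMap.ker gl) := by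
    have e1 : Submodule.comap Φ (Submodule.dualAnnihilator (LinearMap.range gl))
        = Submodule.map (Φe.symm : Module.Dual (ZMod 2) F →ₗ[ZMod 2] F)
            (Submodule.dualAnnihilator (LinearMap.range gl)) := by
      rw [← Submodule.comap_equiv_eq_map_symm]
      rfl
    rw [hker, e1, LinearEquiv.finrank_map_eq]
    have e2 := Submodule.finrank_quotient_add_finrank (LinearMap.range gl)
    have e3 : Module.finrank (ZMod 2) (F ⧸ LinearMap.range gl)
        = Module.finrank (ZMod 2) ((LinearMap.range gl).dualAnnihilator) :=
      LinearEquiv.finrank_eq (Subspace.quotEquivAnnihilator (LinearMap.range gl))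
    have e4 := LinearMap.finrank_range_add_finrank_ker gl
    omega
  -- cardinalities
  letI : Fintype ↥(LinearMap.ker hl) := Fintype.ofFinite _
  letI : Fintype ↥(LinearMap.ker gl) := Fintype.ofFinite _
  have hcards : Nat.card ↥(LinearMap.ker hl) = Nat.card ↥(LinearMap.ker gl) := by
    rw [Nat.card_eq_fintype_card, Nat.card_eq_fintype_card,
      Module.card_eq_pow_finrank (K := ZMod 2) (V := ↥(LinearMap.ker hl)),
      Module.card_eq_pow_finrank (K := ZMod 2) (V := ↥(LinearMap.ker gl)), hfr]
  -- convert to ncard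
  have hsethh : {y : F | hh y = 0} = (LinearMap.ker hl : Set F) := by
    ext y
    simp only [Set.mem_setOf_eq, SetLike.mem_coe, LinearMap.mem_ker, hhl]
  have hsetgg : {y : F | smul a (M y) + y = 0} = (LinearMap.ker gl : Set F) := by
    ext y
    simp only [Set.mem_setOf_eq, SetLike.mem_coe, LinearMap.mem_ker, hgl, hgg]
  rw [hsethh, hsetgg, ← Nat.card_coe_set_eq, ← Nat.card_coe_set_eq]
  exact hcards
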